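/- For every real α > 2 and every x ≥ 0, the SIR coverage function satisfies the upper bound P_α(x) ≤ (1 + x)^(−2/α). -/

import Mathlib

open MeasureTheory Filter Real Set
open scoped Topology

/-- The closed-form downlink SIR coverage denominator:
`h α x = 1 + ∫_1^∞ x / (x + w^(α/2)) dw`. -/
noncomputable def hcov (α x : ℝ) : ℝ := 1 + ∫ w in Set.Ioi (1 : ℝ), x / (x + w ^ (α / 2))

/-- The SIR coverage function `P_α(x) = h_α(x)⁻¹`. -/
noncomputable def Pcov (α x : ℝ) : ℝ := (hcov α x)⁻¹

/-- For every `α > 2` and `x ≥ 0`, `P_α(x) ≤ (1 + x)^(-2/α)`. -/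
theorem sir_coverage_upper_bound (α : ℝ) (hα : 2 < α) (x : ℝ) (hx : 0 ≤ x) :
    Pcov α x ≤ (1 + x) ^ (-(2 / α)) := by
  have hα0 : (0:ℝ) < α := by linarith
  set β : ℝ := α / 2 with hβ
  set δ : ℝ := 2 / α with hδ
  have hβ1 : 1 < β := by rw [hβ]; linarith
  have hδ0 : 0 < δ := by rw [hδ]; positivity
  have hδ1 : δ < 1 := by rw [hδ, div_lt_one hα0]; linarith
  have hβδ : β * δ = 1 := by rw [hβ, hδ]; field_simp
  have h1x : (0:ℝ) < 1 + x := by linarith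
  set f : ℝ → ℝ := fun w => x / (x + w ^ β) with hf
  set g : ℝ → ℝ := fun w => 1 - w ^ (β - 1) * (x + w ^ β) ^ (δ - 1) with hg
  set G : ℝ → ℝ := fun w => w - (x + w ^ β) ^ δ with hG
  have hu : ∀ w : ℝ, 0 < w → 0 < w ^ β := fun w hw => Real.rpow_pos_of_pos hw β
  have hA : ∀ w : ℝ, 0 < w → 0 < x + w ^ β := fun w hw => by
    have := hu w hw; linarith
  -- `G` has derivative `g`
  have hderiv : ∀ w ∈ Ici (1:ℝ), HasDerivAt G (g w) w := by
    intro w hw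
    have hw0 : (0:ℝ) < w := lt_of_lt_of_le one_pos hw
    have h1 : HasDerivAt (fun w : ℝ => x + w ^ β) (β * w ^ (β - 1)) w :=
      (Real.hasDerivAt_rpow_const (p := β) (Or.inl hw0.ne')).const_add x
    have h2 : HasDerivAt (fun w : ℝ => (x + w ^ β) ^ δ)
        (β * w ^ (β - 1) * δ * (x + w ^ β) ^ (δ - 1)) w :=
      h1.rpow_const (Or.inl (hA w hw0).ne')
    have h3 := (hasDerivAt_id w).sub h2
    have heq : (1:ℝ) - β * w ^ (β - 1) * δ * (x + w ^ β) ^ (δ - 1) = g w := by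
      rw [hg]
      have h4 : β * w ^ (β - 1) * δ * (x + w ^ β) ^ (δ - 1)
          = (β * δ) * (w ^ (β - 1) * (x + w ^ β) ^ (δ - 1)) := by ring
      rw [h4, hβδ, one_mul]
    rw [← heq]
    exact h3
  -- rewriting the product term as `(w^β / (x+w^β)) ^ (1-δ)`
  have hprod : ∀ w : ℝ, 0 < w →
      w ^ (β - 1) * (x + w ^ β) ^ (δ - 1) = (w ^ β / (x + w ^ β)) ^ (1 - δ) := by
    intro w hw0
    have huw := hu w hw0
    have hAw := hA w hw0
    have e1 : w ^ (β - 1) = (w ^ β) ^ (1 - δ) := by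
      rw [← Real.rpow_mul hw0.le]
      congr 1
      rw [mul_sub, mul_one, hβδ]
    have e2 : (x + w ^ β) ^ (δ - 1) = ((x + w ^ β) ^ (1 - δ))⁻¹ := by
      rw [show δ - 1 = -(1 - δ) by ring, Real.rpow_neg hAw.le]
    rw [e1, e2, Real.div_rpow huw.le hAw.le, div_eq_mul_inv]
  -- `g` is nonnegative on `(1,∞)`
  have hgpos : ∀ w ∈ Ioi (1:ℝ), 0 ≤ g w := by
    intro w hw
    have hw0 : (0:ℝ) < w := lt_trans one_pos hw
    have huw := hu w hw0
    have hAw := hA w hw0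
    rw [hg]
    simp only
    rw [hprod w hw0]
    have hle : (w ^ β / (x + w ^ β)) ^ (1 - δ) ≤ 1 :=
      Real.rpow_le_one (div_nonneg huw.le hAw.le)
        (div_le_one_of_le₀ (by linarith) hAw.le) (by linarith)
    linarith
  -- pointwise bound `g ≤ f` on `(1,∞)`
  have hpoint : ∀ w ∈ Ioi (1:ℝ), g w ≤ f w := by
    intro w hw
    have hw0 : (0:ℝ) < w := lt_trans one_pos hw
    have huw := hu w hw0
    have hAw := hA w hw0
    have hq0 : 0 < w ^ β / (x + w ^ β) := div_pos huw hAw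
    have hq1 : w ^ β / (x + w ^ β) ≤ 1 := div_le_one_of_le₀ (by linarith) hAw.le
    have h5 : (w ^ β / (x + w ^ β)) ^ (1:ℝ) ≤ (w ^ β / (x + w ^ β)) ^ (1 - δ) :=
      Real.rpow_le_rpow_of_exponent_ge hq0 hq1 (by linarith)
    rw [Real.rpow_one] at h5
    have h6 : x / (x + w ^ β) = 1 - w ^ β / (x + w ^ β) := by
      field_simp
      ring
    rw [hg, hf]
    simp only
    rw [hprod w hw0, h6]
    linarith
  -- `G` tends to `0` at infinity
  have hGlim : Tendsto G atTop (𝓝 0) := by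
    have hupper : ∀ w : ℝ, 1 ≤ w → G w ≤ 0 := by
      intro w hw
      have hw0 : (0:ℝ) < w := lt_of_lt_of_le one_pos hw
      have huw := hu w hw0
      have hwpow : (w ^ β) ^ δ = w := by
        rw [← Real.rpow_mul hw0.le, hβδ, Real.rpow_one]
      have h7 : (w ^ β) ^ δ ≤ (x + w ^ β) ^ δ :=
        Real.rpow_le_rpow huw.le (by linarith) hδ0.le
      rw [hG]
      simp only
      rw [← hwpow] at *
      linarith
    have hlower : ∀ w : ℝ, 1 ≤ w → -(δ * x * w ^ (1 - β)) ≤ G w := by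
      intro w hw
      have hw0 : (0:ℝ) < w := lt_of_lt_of_le one_pos hw
      have huw := hu w hw0
      have hwpow : (w ^ β) ^ δ = w := by
        rw [← Real.rpow_mul hw0.le, hβδ, Real.rpow_one]
      have hA_eq : x + w ^ β = w ^ β * (1 + x / w ^ β) := by
        field_simp
        ring
      have hBern : (1 + x / w ^ β) ^ δ ≤ 1 + δ * (x / w ^ β) :=
        rpow_one_add_le_one_add_mul_self (le_trans (by norm_num : (-1:ℝ) ≤ 0) (by positivity)) hδ0.le hδ1.le
      have h8 : (x + w ^ β) ^ δ = (w ^ β) ^ δ * (1 + x / w ^ β) ^ δ := by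
        rw [hA_eq, Real.mul_rpow huw.le (by positivity)]
      have h9 : (x + w ^ β) ^ δ ≤ w * (1 + δ * (x / w ^ β)) := by
        rw [h8, hwpow]
        exact mul_le_mul_of_nonneg_left hBern hw0.le
      have h10 : w * (1 + δ * (x / w ^ β)) = w + δ * x * (w * (w ^ β)⁻¹) := by
        field_simp
      have h11 : w * (w ^ β)⁻¹ = w ^ (1 - β) := by
        rw [show (1:ℝ) - β = 1 + -β by ring, Real.rpow_add hw0, Real.rpow_one,
          Real.rpow_neg hw0.le]
      rw [hG]
      simp only
      rw [h10, h11] at h9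
      linarith
    have hlim : Tendsto (fun w : ℝ => δ * x * w ^ (1 - β)) atTop (𝓝 0) := by
      have h := tendsto_rpow_neg_atTop (y := β - 1) (by linarith)
      have heq : (fun w : ℝ => δ * x * w ^ (1 - β))
          = fun w : ℝ => δ * x * w ^ (-(β - 1)) := by
        funext w; rw [show (1:ℝ) - β = -(β - 1) by ring]
      rw [heq]
      simpa using h.const_mul (δ * x)
    have hlim' : Tendsto (fun w : ℝ => -(δ * x * w ^ (1 - β))) atTop (𝓝 0) := by
      simpa using hlim.neg
    refine tendsto_of_tendsto_of_tendsto_of_le_of_le' hlim' tendsto_const_nhds ?_ ?_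
    · filter_upwards [eventually_ge_atTop (1:ℝ)] with w hw using hlower w hw
    · filter_upwards [eventually_ge_atTop (1:ℝ)] with w hw using hupper w hw
  -- value of the integral of g
  have hIg : ∫ w in Ioi (1:ℝ), g w = (1 + x) ^ δ - 1 := by
    rw [integral_Ioi_of_hasDerivAt_of_nonneg' hderiv hgpos hGlim]
    rw [hG]
    simp only
    rw [Real.one_rpow, add_comm x 1]
    ring
  have hIgInt : IntegrableOn g (Ioi 1) :=
    integrableOn_Ioi_deriv_of_nonneg' hderiv hgpos hGlim
  -- integrability of f
  have hbnd : IntegrableOn (fun w : ℝ => x * w ^ (-β)) (Ioi 1) :=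
    (integrableOn_Ioi_rpow_of_lt (by linarith) one_pos).const_mul x
  have hfc : ContinuousOn f (Ioi 1) := by
    apply ContinuousOn.div continuousOn_const
    · exact continuousOn_const.add
        (ContinuousOn.rpow_const continuousOn_id fun w _ => Or.inr (by positivity))
    · intro w hw
      exact (hA w (lt_trans one_pos hw)).ne'
  have hIf : IntegrableOn f (Ioi 1) := by
    apply Integrable.mono' hbnd (hfc.aestronglyMeasurable measurableSet_Ioi)
    filter_upwards [ae_restrict_mem measurableSet_Ioi] with w hw
    have hw0 : (0:ℝ) < w := lt_trans one_pos hw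
    have huw := hu w hw0
    have hAw := hA w hw0
    rw [hf]
    simp only
    rw [Real.norm_eq_abs, abs_of_nonneg (div_nonneg hx hAw.le)]
    have h12 : x / (x + w ^ β) ≤ x / w ^ β :=
      div_le_div_of_nonneg_left hx huw (by linarith)
    calc x / (x + w ^ β) ≤ x / w ^ β := h12
      _ = x * w ^ (-β) := by rw [Real.rpow_neg hw0.le, div_eq_mul_inv]
  -- integral comparison
  have hmono : ∫ w in Ioi (1:ℝ), g w ≤ ∫ w in Ioi (1:ℝ), f w :=
    setIntegral_mono_on hIgInt hIf measurableSet_Ioi hpoint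
  have hc : hcov α x = 1 + ∫ w in Ioi (1:ℝ), f w := rfl
  have hmain : (1 + x) ^ δ ≤ hcov α x := by
    rw [hc]
    rw [hIg] at hmono
    linarith
  -- conclusion
  rw [Pcov, Real.rpow_neg h1x.le]
  exact inv_anti₀ (Real.rpow_pos_of_pos h1x δ) hmain
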